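/- Let O, W be random variables, φ₀, φ : ℝ → ℝ measurable, q a square-integrable function of W, and suppose q(W) = E[ξ(Y_j) | W] for some ξ and E[Y₁ − φ₀(Y_j) | W] = 0 almost surely. Define the score ψ(φ) = α(R)·φ(Y_j) + q(W)·(Y₁ − φ(Y_j)). If additionally E[α(R)·h(Y_j)] = E[q(W)·h(Y_j)] for all square-integrable functions h (the Riesz representation/debiasing property), then the Gateaux derivative of E[ψ(φ₀ + t·h)] in t at t = 0 is zero for every direction h: d/dt E[ψ(φ₀ + t·h)]|_{t=0} = E[α(R)·h(Y_j)] − E[q(W)·h(Y_j)] = 0. -/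

import Mathlib

open MeasureTheory

/-- Neyman orthogonality: With score
ψ(φ) = α(R)·φ(Y_j) + q(W)·(Y₁ − φ(Y_j)), where q(W) = E[ξ(Y_j) | W],
E[Y₁ − φ₀(Y_j) | W] = 0 a.s., and the Riesz/debiasing property
E[α(R)·h(Y_j)] = E[q(W)·h(Y_j)] holds for all square-integrable directions h, the
Gateaux derivative of t ↦ E[ψ(φ₀ + t·h)] at t = 0 is zero for every direction h. -/
theorem stmt16 {Ω : Type*} [MeasureSpace Ω] (μ : Measure Ω) [IsProbabilityMeasure μ]
    (Y₁ Yj W R : Ω → ℝ) (hY₁ : Measurable Y₁) (hYj : Measurable Yj)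
    (hW : Measurable W) (hR : Measurable R)
    (φ₀ α q ξ : ℝ → ℝ) (hφ₀ : Measurable φ₀) (hα : Measurable α)
    (hqm : Measurable q) (hξ : Measurable ξ)
    (hq2 : MemLp (fun ω => q (W ω)) 2 μ)
    (hq : (fun ω => q (W ω)) =ᵐ[μ]
      μ[fun ω => ξ (Yj ω) | MeasurableSpace.comap W (borel ℝ)])
    (hbridge : μ[fun ω => Y₁ ω - φ₀ (Yj ω) | MeasurableSpace.comap W (borel ℝ)] =ᵐ[μ] 0)
    (hriesz : ∀ h : ℝ → ℝ, Measurable h →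
      Integrable (fun ω => α (R ω) * h (Yj ω)) μ →
      Integrable (fun ω => q (W ω) * h (Yj ω)) μ →
      ∫ ω, α (R ω) * h (Yj ω) ∂μ = ∫ ω, q (W ω) * h (Yj ω) ∂μ) :
    ∀ h : ℝ → ℝ, Measurable h →
      Integrable (fun ω => α (R ω) * φ₀ (Yj ω)) μ →
      Integrable (fun ω => α (R ω) * h (Yj ω)) μ →
      Integrable (fun ω => q (W ω) * Y₁ ω) μ →
      Integrable (fun ω => q (W ω) * φ₀ (Yj ω)) μ →
      Integrable (fun ω => q (W ω) * h (Yj ω)) μ →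
      HasDerivAt
        (fun t : ℝ => ∫ ω,
          (α (R ω) * (φ₀ (Yj ω) + t * h (Yj ω))
            + q (W ω) * (Y₁ ω - (φ₀ (Yj ω) + t * h (Yj ω)))) ∂μ)
        0 0 := by
  intro h hh hint1 hint2 hint3 hint4 hint5
  have hF : Integrable
      (fun ω => α (R ω) * φ₀ (Yj ω) + (q (W ω) * Y₁ ω - q (W ω) * φ₀ (Yj ω))) μ :=
    hint1.add (hint3.sub hint4)
  have hG : Integrable (fun ω => α (R ω) * h (Yj ω) - q (W ω) * h (Yj ω)) μ :=
    hint2.sub hint5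
  have hG0 : ∫ ω, (α (R ω) * h (Yj ω) - q (W ω) * h (Yj ω)) ∂μ = 0 := by
    rw [integral_sub hint2 hint5, hriesz h hh hint2 hint5, sub_self]
  have key : ∀ t : ℝ,
      (∫ ω, (α (R ω) * (φ₀ (Yj ω) + t * h (Yj ω))
        + q (W ω) * (Y₁ ω - (φ₀ (Yj ω) + t * h (Yj ω)))) ∂μ)
      = (∫ ω, (α (R ω) * φ₀ (Yj ω) + (q (W ω) * Y₁ ω - q (W ω) * φ₀ (Yj ω))) ∂μ)
        + t * ∫ ω, (α (R ω) * h (Yj ω) - q (W ω) * h (Yj ω)) ∂μ := by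
    intro t
    rw [← integral_const_mul, ← integral_add hF (hG.const_mul t)]
    congr 1; funext ω; ring
  simp_rw [key, hG0, mul_zero, add_zero]
  exact hasDerivAt_const 0 _
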